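/- Let C_1, …, C_k be cycles with nonnegative weights w(C_1), …, w(C_k), and let x_{C_1}, …, x_{C_k} be strings over the DNA alphabet such that for all distinct indices i, j and every u ∈ {x_{C_i}, x̄_{C_i}^R}: ov(u, x_{C_j}) ≤ w(C_i) + (1/2)·w(C_j) and ov(u, x̄_{C_j}^R) ≤ w(C_i) + w(C_j). Let A = {x_{C_1}, …, x_{C_k}} and suppose that, after reindexing, ⟨x'_{C_1}, …, x'_{C_k}⟩ is a shortest approximate solution for the SCS-RC instance A, where each x'_{C_j} ∈ {x_{C_j}, x̄_{C_j}^R}. Then OV(A) = Σ_{j=1}^{k−1} ov(x'_{C_j}, x'_{C_{j+1}}) ≤ 1.75·Σ_{j=1}^{k} w(C_j). -/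

import Mathlib

/-- The DNA alphabet. -/
inductive DNA : Type
  | A | T | G | C
  deriving DecidableEq, Repr

/-- Complement of a DNA base: a↔t, g↔c. -/
def DNA.compl : DNA → DNA
  | .A => .T
  | .T => .A
  | .G => .C
  | .C => .G

/-- Strings over the DNA alphabet. -/
abbrev Str : Type := List DNA

/-- Reverse complement of a string. -/
def rc (s : Str) : Str := (s.map DNA.compl).reverse

/-- An approximate solution for the SCS-RC instance `S`: a string containing,
for each `s ∈ S`, either `s` or its reverse complement as a substring. -/
def ApproxSol (S : Finset Str) (u : Str) : Prop :=
  ∀ s ∈ S, s <:+: u ∨ rc s <:+: u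

/-- `OPT S` is the minimum length of an approximate solution for the SCS-RC instance `S`. -/
noncomputable def OPT (S : Finset Str) : ℕ :=
  sInf {n | ∃ u : Str, ApproxSol S u ∧ u.length = n}

/-- `S` is substring-free: no string of `S ∪ S̄^R` is a substring of another. -/
def SubstrFree (S : Finset Str) : Prop :=
  ∀ x, (x ∈ S ∨ rc x ∈ S) → ∀ y, (y ∈ S ∨ rc y ∈ S) → x ≠ y → ¬ x <:+: y

/-- `ov x y`: the length of the longest string `v` such that `x = u ++ v` and
`y = v ++ w` for nonempty `u`, `w`. -/
noncomputable def ov (x y : Str) : ℕ :=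
  sSup {k | ∃ v : Str, v.length = k ∧ (∃ u : Str, u ≠ [] ∧ x = u ++ v) ∧
        (∃ w : Str, w ≠ [] ∧ y = v ++ w)}

/-- `prefStr x y = pref(x, y)`: the prefix of `x` with respect to `y`. -/
noncomputable def prefStr (x y : Str) : Str := x.take (x.length - ov x y)

/-- `distStr x y = dist(x, y) = |x| - ov(x, y)`. -/
noncomputable def distStr (x y : Str) : ℕ := x.length - ov x y

/-- The merge `⟨x, y⟩ = pref(x, y) ++ y`. -/
noncomputable def mergeStr (x y : Str) : Str := prefStr x y ++ y

/-- `superstr [x1, …, xr] = ⟨x1, …, xr⟩ = pref(x1,x2) ⋯ pref(x_{r-1},x_r) ++ x_r`. -/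
noncomputable def superstr : List Str → Str
  | [] => []
  | [x] => x
  | x :: y :: rest => prefStr x y ++ superstr (y :: rest)

/-- `‖S‖`: the total length of the strings of the finite set `S`. -/
def normS (S : Finset Str) : ℕ := ∑ s ∈ S, s.length

/-- Pairs `(x, y)` of strings from the collection `S` or their reverse complements,
with `x = y`, or with `x ≠ y` and `rc x ≠ y`, as considered by MGREEDY-RC. -/
def ValidPair (S : Finset Str) (x y : Str) : Prop :=
  (x ∈ S ∨ rc x ∈ S) ∧ (y ∈ S ∨ rc y ∈ S) ∧ (x = y ∨ (x ≠ y ∧ rc x ≠ y))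

/-- `MGreedyExec S T`: some execution of MGREEDY-RC starting from the collection `S`
(under some tie-breaking among pairs of maximum overlap) produces the set `T`. -/
inductive MGreedyExec : Finset Str → Finset Str → Prop
  | done : MGreedyExec ∅ ∅
  | close (S T : Finset Str) (x : Str)
      (hx : x ∈ S ∨ rc x ∈ S)
      (hmax : ∀ a b, ValidPair S a b → ov a b ≤ ov x x)
      (h : MGreedyExec (S \ {x, rc x}) T) :
      MGreedyExec S (insert x T)
  | merge (S T : Finset Str) (x y : Str)
      (hx : x ∈ S ∨ rc x ∈ S) (hy : y ∈ S ∨ rc y ∈ S)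
      (hne : x ≠ y) (hrc : rc x ≠ y)
      (hmax : ∀ a b, ValidPair S a b → ov a b ≤ ov x y)
      (h : MGreedyExec (insert (mergeStr x y) (S \ {x, rc x, y, rc y})) T) :
      MGreedyExec S T

/-- `GreedyExec S u`: some execution of GREEDY-RC starting from the collection `S`
(under some tie-breaking among pairs of maximum overlap) outputs the string `u`. -/
inductive GreedyExec : Finset Str → Str → Prop
  | single (x : Str) : GreedyExec {x} x
  | merge (S : Finset Str) (u x y : Str)
      (hx : x ∈ S ∨ rc x ∈ S) (hy : y ∈ S ∨ rc y ∈ S)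
      (hne : x ≠ y) (hrc : rc x ≠ y)
      (hmax : ∀ a b, (a ∈ S ∨ rc a ∈ S) → (b ∈ S ∨ rc b ∈ S) → a ≠ b → rc a ≠ b →
        ov a b ≤ ov x y)
      (hcard : 1 < S.card)
      (h : GreedyExec (insert (mergeStr x y) (S \ {x, rc x, y, rc y})) u) :
      GreedyExec S u

/-- Reverse complement of a path: the path of the reverse complements, reversed. -/
def rcPath (p : List Str) : List Str := (p.map rc).reverse

/-- Valid pairs for the path-level description of MGREEDY-RC, where each collection
element is the path of original strings composing it, its string value being `superstr`. -/
def ValidPairP (P : Finset (List Str)) (p q : List Str) : Prop :=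
  (p ∈ P ∨ rcPath p ∈ P) ∧ (q ∈ P ∨ rcPath q ∈ P) ∧
  (superstr p = superstr q ∨ (superstr p ≠ superstr q ∧ rc (superstr p) ≠ superstr q))

/-- `MGreedyCyc P C`: the path-level description of an execution of MGREEDY-RC.
Starting from the collection of paths `P`, merging the paths `p` and `q` (adding the
edge from the last vertex of `p` to the first of `q`) when the corresponding strings
are merged, and closing the path `p` into the cycle `p` (with the edge from its last
vertex to its first) when the corresponding string is moved to `T`, some execution
produces the set of closed cycles `C`. -/
inductive MGreedyCyc : Finset (List Str) → Finset (List Str) → Prop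
  | done : MGreedyCyc ∅ ∅
  | close (P C : Finset (List Str)) (p : List Str)
      (hp : p ∈ P ∨ rcPath p ∈ P)
      (hmax : ∀ q₁ q₂, ValidPairP P q₁ q₂ →
        ov (superstr q₁) (superstr q₂) ≤ ov (superstr p) (superstr p))
      (h : MGreedyCyc (P \ {p, rcPath p}) C) :
      MGreedyCyc P (insert p C)
  | merge (P C : Finset (List Str)) (p q : List Str)
      (hp : p ∈ P ∨ rcPath p ∈ P) (hq : q ∈ P ∨ rcPath q ∈ P)
      (hne : superstr p ≠ superstr q) (hrc : rc (superstr p) ≠ superstr q)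
      (hmax : ∀ q₁ q₂, ValidPairP P q₁ q₂ →
        ov (superstr q₁) (superstr q₂) ≤ ov (superstr p) (superstr q))
      (h : MGreedyCyc (insert (p ++ q) (P \ {p, rcPath p, q, rcPath q})) C) :
      MGreedyCyc P C

/-- The weight of the cycle `x1, …, xr, x1` given by the list `[x1, …, xr]`:
`Σ_{i=1}^{r} dist(x_i, x_{i+1})` with indices modulo `r`. -/
noncomputable def cycleWeight (c : List Str) : ℕ :=
  ((c.zip (c.rotate 1)).map fun p => distStr p.1 p.2).sum

/-- `C` is a cycle cover of the distance graph `G_S`: a set of vertex-disjoint cycles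
on vertices of `S ∪ S̄^R` such that for each `s ∈ S` exactly one of `s` and `rc s`
is contained in the cycles. -/
def IsCycleCover (S : Finset Str) (C : Finset (List Str)) : Prop :=
  (∀ c ∈ C, c ≠ []) ∧
  (∀ c ∈ C, c.Nodup) ∧
  (∀ c ∈ C, ∀ d ∈ C, c ≠ d → ∀ x ∈ c, x ∉ d) ∧
  (∀ c ∈ C, ∀ x ∈ c, x ∈ S ∨ rc x ∈ S) ∧
  (∀ s ∈ S, Xor' (∃ c ∈ C, s ∈ c) (∃ c ∈ C, rc s ∈ c))

/-- The total weight of a cycle cover. -/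
noncomputable def coverWeight (C : Finset (List Str)) : ℕ := ∑ c ∈ C, cycleWeight c

/-- `minCoverWeight S = w(CYC(G_S))`: the minimum total weight of a cycle cover of `G_S`. -/
noncomputable def minCoverWeight (S : Finset Str) : ℕ :=
  sInf {n | ∃ C : Finset (List Str), IsCycleCover S C ∧ coverWeight C = n}

/-- `x` is a factor of `s`: `s = x^i ++ y` for some `i ≥ 1` and some prefix `y` of `x`. -/
def IsFactor (x s : Str) : Prop :=
  x ≠ [] ∧ ∃ i : ℕ, 1 ≤ i ∧ ∃ y : Str, y <+: x ∧ s = (List.replicate i x).flatten ++ y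

/-- `period s`: the length of the shortest factor of `s`. -/
noncomputable def periodStr (s : Str) : ℕ :=
  sInf {k | ∃ x : Str, IsFactor x s ∧ x.length = k}

open Classical in
/-- `factorStr s`: a shortest factor of `s`. -/
noncomputable def factorStr (s : Str) : Str :=
  if h : ∃ x : Str, IsFactor x s ∧ x.length = periodStr s then h.choose else []

/-- Two strings are equivalent if the factor of one is a cyclic shift of the factor
of the other. -/
def EquivStr (x y : Str) : Prop :=
  ∃ e f : Str, factorStr x = e ++ f ∧ factorStr y = f ++ e
lemma rc_append (s t : Str) : rc (s ++ t) = rc t ++ rc s := by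
  simp [rc]

lemma rc_rc (s : Str) : rc (rc s) = s := by
  simp only [rc, List.map_reverse, List.reverse_reverse, List.map_map]
  have : DNA.compl ∘ DNA.compl = id := funext fun b => by cases b <;> rfl
  simp [this]

lemma rc_eq_nil_iff (s : Str) : rc s = [] ↔ s = [] := by
  simp [rc]

lemma rc_length (s : Str) : (rc s).length = s.length := by
  simp [rc]

lemma ov_rc (a b : Str) : ov (rc b) (rc a) = ov a b := by
  unfold ov
  congr 1
  ext m
  constructor
  · rintro ⟨v, hv, ⟨u, hu, hb⟩, ⟨t, ht, ha⟩⟩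
    refine ⟨rc v, by rw [rc_length, hv], ⟨rc t, ?_, ?_⟩, ⟨rc u, ?_, ?_⟩⟩
    · simpa [rc_eq_nil_iff] using ht
    · have : a = rc (rc a) := (rc_rc a).symm
      rw [this, ha, rc_append]
    · simpa [rc_eq_nil_iff] using hu
    · have : b = rc (rc b) := (rc_rc b).symm
      rw [this, hb, rc_append]
  · rintro ⟨v, hv, ⟨u, hu, ha⟩, ⟨t, ht, hb⟩⟩
    refine ⟨rc v, by rw [rc_length, hv], ⟨rc t, ?_, ?_⟩, ⟨rc u, ?_, ?_⟩⟩
    · simpa [rc_eq_nil_iff] using ht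
    · rw [hb, rc_append]
    · simpa [rc_eq_nil_iff] using hu
    · rw [ha, rc_append]

lemma zip_tail_ofFn {α β : Type*} (g : α → α → β) :
    ∀ (n : ℕ) (f : Fin (n + 1) → α),
      ((List.ofFn f).zip (List.ofFn f).tail).map (fun p => g p.1 p.2)
        = List.ofFn (fun i : Fin n => g (f i.castSucc) (f i.succ)) := by
  intro n
  induction n with
  | zero => intro f; simp
  | succ m ih =>
    intro f
    rw [List.ofFn_succ]
    have htail : (List.ofFn fun i : Fin (m + 1) => f i.succ)
        = f 1 :: List.ofFn (fun i : Fin m => f i.succ.succ) := by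
      rw [List.ofFn_succ]; simp
    rw [show (f 0 :: List.ofFn fun i : Fin (m + 1) => f i.succ).tail
        = List.ofFn fun i : Fin (m + 1) => f i.succ from rfl]
    conv_lhs => rw [htail]
    have := ih (fun i => f i.succ)
    rw [htail] at this
    simp only [List.tail_cons, List.zip_cons_cons, List.map_cons] at this ⊢
    rw [this, List.ofFn_succ]
    simp [Fin.succ_castSucc, -Fin.castSucc_succ]

/-- under the overlap bounds coming from the overlap rotation lemma and
the inequivalence of distinct cycles, the total overlap `OV(A)` along an optimal
superstring for `A` is at most `1.75·Σ_j w(C_j)`. -/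
theorem ov_A_upperbound
    (k : ℕ) (w : Fin k → ℝ) (hw : ∀ j, 0 ≤ w j)
    (x : Fin k → Str)
    (hov : ∀ i j : Fin k, i ≠ j → ∀ u : Str, (u = x i ∨ u = rc (x i)) →
      (ov u (x j) : ℝ) ≤ w i + w j / 2 ∧ (ov u (rc (x j)) : ℝ) ≤ w i + w j)
    (x' : Fin k → Str) (hx' : ∀ j, x' j = x j ∨ x' j = rc (x j))
    (happrox : ApproxSol (Finset.univ.image x) (superstr (List.ofFn x')))
    (hshort : (superstr (List.ofFn x')).length = OPT (Finset.univ.image x)) :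
    ((((List.ofFn x').zip (List.ofFn x').tail).map fun p => ov p.1 p.2).sum : ℝ)
      ≤ 1.75 * ∑ j, w j := by
  cases k with
  | zero =>
    simp
  | succ n =>
    classical
    set A : Fin (n + 1) → ℝ := fun j => if x' j = x j then w j else 3 / 4 * w j with hA
    set B : Fin (n + 1) → ℝ := fun j => if x' j = x j then 3 / 4 * w j else w j with hB
    have hApos : ∀ j, 0 ≤ A j := by
      intro j; simp only [hA]; split
      · exact hw j
      · linarith [hw j]
    have hBpos : ∀ j, 0 ≤ B j := by
      intro j; simp only [hB]; split
      · linarith [hw j]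
      · exact hw j
    have hAB : ∀ j, A j + B j = 1.75 * w j := by
      intro j; simp only [hA, hB]
      rw [show (1.75 : ℝ) = 7 / 4 by norm_num]
      split <;> ring
    have key : ∀ i : Fin n, (ov (x' i.castSucc) (x' i.succ) : ℝ) ≤ A i.castSucc + B i.succ := by
      intro i
      set p := i.castSucc with hp
      set q := i.succ with hq
      have hpq : p ≠ q := (Fin.castSucc_lt_succ (i := i)).ne
      simp only [hA, hB]
      by_cases h1 : x' p = x p
      · by_cases h2 : x' q = x q
        · rw [if_pos h1, if_pos h2]
          have h := (hov p q hpq (x' p) (Or.inl h1)).1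
          rw [← h2] at h
          linarith [hw q]
        · rw [if_pos h1, if_neg h2]
          have hr2 : x' q = rc (x q) := (hx' q).resolve_left h2
          have h := (hov p q hpq (x' p) (Or.inl h1)).2
          rw [← hr2] at h
          linarith
      · have hr1 : x' p = rc (x p) := (hx' p).resolve_left h1
        by_cases h2 : x' q = x q
        · rw [if_neg h1, if_pos h2]
          have hA1 := (hov p q hpq (x' p) (Or.inr hr1)).1
          rw [← h2] at hA1
          have heq : ov (x' p) (x' q) = ov (rc (x q)) (x p) := by
            rw [← ov_rc (x' p) (x' q), h2, hr1, rc_rc]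
          have hA2 := (hov q p hpq.symm (rc (x q)) (Or.inr rfl)).1
          rw [← heq] at hA2
          rcases le_total (w p) (w q) with h | h
          · linarith
          · linarith
        · rw [if_neg h1, if_neg h2]
          have hr2 : x' q = rc (x q) := (hx' q).resolve_left h2
          have heq : ov (x' p) (x' q) = ov (x q) (x p) := by
            rw [← ov_rc (x' p) (x' q), hr2, rc_rc, hr1, rc_rc]
          have h := (hov q p hpq.symm (x q) (Or.inl rfl)).1
          rw [← heq] at h
          linarith [hw p]
    rw [zip_tail_ofFn (fun a b => ov a b) n x', List.sum_ofFn]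
    push_cast
    calc ∑ i : Fin n, (ov (x' i.castSucc) (x' i.succ) : ℝ)
        ≤ ∑ i : Fin n, (A i.castSucc + B i.succ) :=
          Finset.sum_le_sum fun i _ => key i
      _ = ∑ i : Fin n, A i.castSucc + ∑ i : Fin n, B i.succ := Finset.sum_add_distrib
      _ ≤ ∑ j : Fin (n + 1), A j + ∑ j : Fin (n + 1), B j := by
          rw [Fin.sum_univ_castSucc (f := A), Fin.sum_univ_succ (f := B)]
          have h1 := hApos (Fin.last n)
          have h2 := hBpos 0
          linarith
      _ = ∑ j : Fin (n + 1), (A j + B j) := Finset.sum_add_distrib.symm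
      _ = ∑ j : Fin (n + 1), 1.75 * w j := Finset.sum_congr rfl fun j _ => hAB j
      _ = 1.75 * ∑ j, w j := (Finset.mul_sum _ _ _).symm
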